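/- Let E be a real inner product space, a ∈ E, and b ∈ ℝ. Then the function x ↦ |⟨a, x⟩² − b| + ‖a‖²·‖x‖² is convex on E. Equivalently, the robust phase retrieval component function x ↦ |⟨a, x⟩² − b| is τ-weakly convex with parameter τ = 2‖a‖². -/

import Mathlib

open scoped RealInnerProductSpace

lemma aux_Q_convex {E : Type*} [NormedAddCommGroup E] [InnerProductSpace ℝ E]
    (a : E) :
    ConvexOn ℝ Set.univ (fun x : E => ‖a‖ ^ 2 * ‖x‖ ^ 2 - ⟪a, x⟫ ^ 2) := by
  refine ⟨convex_univ, ?_⟩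
  intro x _ y _ s t hs ht hst
  have hxy : ‖s • x + t • y‖ ^ 2
      = s ^ 2 * ‖x‖ ^ 2 + 2 * (s * t) * ⟪x, y⟫ + t ^ 2 * ‖y‖ ^ 2 := by
    rw [norm_add_sq_real, real_inner_smul_left, real_inner_smul_right,
      norm_smul, norm_smul]
    simp only [Real.norm_eq_abs, mul_pow, sq_abs]
    ring
  have hinner : ⟪a, s • x + t • y⟫ = s * ⟪a, x⟫ + t * ⟪a, y⟫ := by
    rw [inner_add_right, real_inner_smul_right, real_inner_smul_right]
  have hcs : ⟪a, x - y⟫ ^ 2 ≤ ‖a‖ ^ 2 * ‖x - y‖ ^ 2 := by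
    have h := abs_real_inner_le_norm a (x - y)
    have h2 : ⟪a, x - y⟫ ^ 2 ≤ (‖a‖ * ‖x - y‖) ^ 2 := by
      rw [← sq_abs]; exact pow_le_pow_left₀ (abs_nonneg _) h 2
    nlinarith [h2]
  have hsub : ⟪a, x - y⟫ = ⟪a, x⟫ - ⟪a, y⟫ := inner_sub_right a x y
  have hnsub : ‖x - y‖ ^ 2 = ‖x‖ ^ 2 - 2 * ⟪x, y⟫ + ‖y‖ ^ 2 := by
    rw [norm_sub_sq_real]
  have key : (⟪a, x⟫ - ⟪a, y⟫) ^ 2 ≤ ‖a‖ ^ 2 * (‖x‖ ^ 2 - 2 * ⟪x, y⟫ + ‖y‖ ^ 2) := by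
    rw [← hsub, ← hnsub]; exact hcs
  have ht' : t = 1 - s := by linarith
  subst ht'
  have hs1 : s ≤ 1 := by linarith
  simp only [smul_eq_mul]
  rw [hxy, hinner]
  nlinarith [mul_nonneg (mul_nonneg hs (by linarith : (0:ℝ) ≤ 1 - s))
    (sub_nonneg.2 key)]

/-- The robust phase retrieval component x ↦ |⟨a,x⟩² − b| is weakly convex with
parameter 2‖a‖². -/
theorem robust_phase_retrieval_weaklyConvex
    {E : Type*} [NormedAddCommGroup E] [InnerProductSpace ℝ E]
    (a : E) (b : ℝ) :
    ConvexOn ℝ Set.univ (fun x : E => |⟪a, x⟫ ^ 2 - b| + ‖a‖ ^ 2 * ‖x‖ ^ 2) := by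
  have h1 : ConvexOn ℝ Set.univ
      (fun x : E => (⟪a, x⟫ ^ 2 - b) + ‖a‖ ^ 2 * ‖x‖ ^ 2) := by
    have hsq : ConvexOn ℝ Set.univ (fun x : E => ⟪a, x⟫ ^ 2) := by
      have hpow : ConvexOn ℝ Set.univ (fun y : ℝ => y ^ 2) :=
        Even.convexOn_pow even_two
      have := hpow.comp_affineMap ((innerₗ E a).toAffineMap)
      exact this
    have hn : ConvexOn ℝ Set.univ (fun x : E => ‖a‖ ^ 2 * ‖x‖ ^ 2) := by
      have h := (aux_Q_convex a).add hsq
      have h' : (fun x : E => ‖a‖ ^ 2 * ‖x‖ ^ 2)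
          = (fun x : E => ‖a‖ ^ 2 * ‖x‖ ^ 2 - ⟪a, x⟫ ^ 2) + fun x : E => ⟪a, x⟫ ^ 2 := by
        funext x; simp
      rw [h']; exact h
    have := (hsq.add (convexOn_const (-b) convex_univ)).add hn
    simpa [sub_eq_add_neg] using (show ConvexOn ℝ Set.univ (fun x : E => (⟪a, x⟫ ^ 2 + -b) + ‖a‖ ^ 2 * ‖x‖ ^ 2) from this)
  have h2 : ConvexOn ℝ Set.univ
      (fun x : E => (b - ⟪a, x⟫ ^ 2) + ‖a‖ ^ 2 * ‖x‖ ^ 2) := by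
    have := (aux_Q_convex a).add (convexOn_const b convex_univ)
    have h' : (fun x : E => (b - ⟪a, x⟫ ^ 2) + ‖a‖ ^ 2 * ‖x‖ ^ 2)
        = fun x : E => (‖a‖ ^ 2 * ‖x‖ ^ 2 - ⟪a, x⟫ ^ 2) + b := by
      funext x; ring
    rw [h']
    exact this
  have := h1.sup h2
  have heq : (fun x : E => |⟪a, x⟫ ^ 2 - b| + ‖a‖ ^ 2 * ‖x‖ ^ 2)
      = (fun x : E => (⟪a, x⟫ ^ 2 - b) + ‖a‖ ^ 2 * ‖x‖ ^ 2) ⊔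
        (fun x : E => (b - ⟪a, x⟫ ^ 2) + ‖a‖ ^ 2 * ‖x‖ ^ 2) := by
    funext x
    simp only [Pi.sup_apply]
    rw [abs_sub_comm]
    rcases le_total (⟪a, x⟫ ^ 2) b with h | h
    · rw [abs_of_nonneg (by linarith), max_eq_right (by linarith)]
    · rw [abs_of_nonpos (by linarith), max_eq_left (by linarith)]; ring
  rw [heq]
  exact this
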